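/- Let η ∈ (0,1), ρ > 0, k < n, ℓ := ⌊c̃η³ρ²k⌋, and let 𝒱 be the set of k×n matrices V with orthonormal rows whose every row r satisfies r*_{⌊ηn⌋} ≥ ρ/√n. Let B be an n×n matrix such that ‖BVᵀ‖ ≤ s for some V ∈ 𝒱 and s > 0. Let I ⊂ [n] with |I| = ℓ be a set satisfying: ‖V_j‖₂ ≤ √(Ck/(ηn)) for all j ∈ I, and ‖Σ_{j∈I} z_j V_j‖₂ ≥ cρ√(ηk/n)‖z‖₂ for all z ∈ ℂ^I. Let P_I denote the orthogonal projection onto the orthogonal complement of span{col_u(B) : u ∈ [n]\I}. Then ‖P_I col_j(B)‖₂ ≤ (√2/(cρ))·√(n/(ηk))·s for at least ℓ/2 indices j ∈ I. -/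

import Mathlib

/-- The `r`-th largest absolute value of the coordinates of a vector `x : Fin n → ℂ`. -/
noncomputable def orderStat {n : ℕ} (x : Fin n → ℂ) (r : ℕ) : ℝ :=
  sSup {t : ℝ | r ≤ Set.ncard {i : Fin n | t ≤ ‖x i‖}}

private lemma eucl_norm_sq {ι : Type*} [Fintype ι] (x : EuclideanSpace ℂ ι) :
    ‖x‖ ^ 2 = ∑ i, ‖x i‖ ^ 2 := by
  rw [EuclideanSpace.norm_eq, Real.sq_sqrt (Finset.sum_nonneg fun i _ => sq_nonneg _)]

private lemma parseval_mem {n : ℕ} (W : Submodule ℂ (EuclideanSpace ℂ (Fin n)))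
    (v : EuclideanSpace ℂ (Fin n)) (hv : v ∈ W) :
    ‖v‖ ^ 2 = ∑ t : Fin (Module.finrank ℂ W),
      ‖(inner ℂ (((stdOrthonormalBasis ℂ W) t : W) : EuclideanSpace ℂ (Fin n)) v : ℂ)‖ ^ 2 := by
  set b := stdOrthonormalBasis ℂ W with hb
  have h1 : ‖v‖ = ‖b.repr ⟨v, hv⟩‖ := (b.repr.norm_map ⟨v, hv⟩).symm
  rw [h1, eucl_norm_sq]
  refine Finset.sum_congr rfl fun t _ => ?_
  rw [b.repr_apply_apply]
  rfl

private lemma hs_bound {k n : ℕ} (A : EuclideanSpace ℂ (Fin k) →L[ℂ] EuclideanSpace ℂ (Fin n))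
    (W : Submodule ℂ (EuclideanSpace ℂ (Fin n)))
    (hW : ∀ i, A (EuclideanSpace.single i 1) ∈ W) :
    ∑ i, ‖A (EuclideanSpace.single i 1)‖ ^ 2 ≤ (Module.finrank ℂ W : ℝ) * ‖A‖ ^ 2 := by
  set b := stdOrthonormalBasis ℂ W with hb
  have step : ∀ t : Fin (Module.finrank ℂ W),
      ∑ i, ‖(inner ℂ ((b t : W) : EuclideanSpace ℂ (Fin n)) (A (EuclideanSpace.single i 1)) : ℂ)‖ ^ 2
        ≤ ‖A‖ ^ 2 := by
    intro t
    set u : EuclideanSpace ℂ (Fin n) := ((b t : W) : EuclideanSpace ℂ (Fin n)) with hu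
    have hnu : ‖u‖ = 1 := by
      rw [hu, Submodule.norm_coe]
      exact b.orthonormal.1 t
    have hinner : ∀ i : Fin k, (inner ℂ u (A (EuclideanSpace.single i 1)) : ℂ)
        = (starRingEnd ℂ) ((ContinuousLinearMap.adjoint A u) i) := by
      intro i
      rw [← ContinuousLinearMap.adjoint_inner_left]
      rw [show ((1:ℂ)) = ((1:ℂ):ℂ) from rfl]
      rw [EuclideanSpace.inner_single_right]
      ring
    calc ∑ i, ‖(inner ℂ u (A (EuclideanSpace.single i 1)) : ℂ)‖ ^ 2
        = ∑ i, ‖(ContinuousLinearMap.adjoint A u) i‖ ^ 2 := by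
          refine Finset.sum_congr rfl fun i _ => ?_
          rw [hinner i, RCLike.norm_conj]
      _ = ‖ContinuousLinearMap.adjoint A u‖ ^ 2 := (eucl_norm_sq _).symm
      _ ≤ ‖A‖ ^ 2 := by
          have h1 : ‖ContinuousLinearMap.adjoint A u‖ ≤ ‖A‖ := by
            calc ‖ContinuousLinearMap.adjoint A u‖ ≤ ‖ContinuousLinearMap.adjoint A‖ * ‖u‖ :=
              (ContinuousLinearMap.adjoint A).le_opNorm u
            _ = ‖A‖ := by rw [hnu, mul_one, ContinuousLinearMap.adjoint.norm_map]
          exact pow_le_pow_left₀ (norm_nonneg _) h1 2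
  calc ∑ i, ‖A (EuclideanSpace.single i 1)‖ ^ 2
      = ∑ i, ∑ t, ‖(inner ℂ ((b t : W) : EuclideanSpace ℂ (Fin n)) (A (EuclideanSpace.single i 1)) : ℂ)‖ ^ 2 :=
        Finset.sum_congr rfl fun i _ => parseval_mem W _ (hW i)
    _ = ∑ t, ∑ i, ‖(inner ℂ ((b t : W) : EuclideanSpace ℂ (Fin n)) (A (EuclideanSpace.single i 1)) : ℂ)‖ ^ 2 :=
        Finset.sum_comm
    _ ≤ ∑ _t : Fin (Module.finrank ℂ W), ‖A‖ ^ 2 := Finset.sum_le_sum fun t _ => step t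
    _ = (Module.finrank ℂ W : ℝ) * ‖A‖ ^ 2 := by
        rw [Finset.sum_const, Finset.card_univ, Fintype.card_fin, nsmul_eq_mul]


set_option maxHeartbeats 1000000 in
/-- from a bound `‖BVᵀ‖ ≤ s` (operator norm), where `V` is a `k × n`
matrix with orthonormal, spread rows, and a set `I` of cardinality `ℓ = ⌊c̃η³ρ²k⌋`
satisfying the conclusions of the randomized restricted invertibility lemma, one gets
`‖P_I col_j(B)‖₂ ≤ (√2/(cρ))·√(n/(ηk))·s` for at least `ℓ/2` indices `j ∈ I`, where
`P_I` is the orthogonal projection onto the orthogonal complement of the span of the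
columns of `B` outside `I`. -/
theorem stmt11 (ctil C c : ℝ) (hctil : 0 < ctil) (hC : 0 < C) (hc : 0 < c)
    (n k : ℕ) (η ρ : ℝ) (hη : η ∈ Set.Ioo (0:ℝ) 1) (hρ : 0 < ρ) (hkn : k < n)
    (V : Matrix (Fin k) (Fin n) ℂ)
    (hVon : Orthonormal ℂ (fun i => (show EuclideanSpace ℂ (Fin n) from WithLp.toLp 2 (fun j => V i j))))
    (hVspread : ∀ i : Fin k, ρ / Real.sqrt n ≤ orderStat (fun j => V i j) ⌊η * n⌋₊)
    (B : Matrix (Fin n) (Fin n) ℂ) (s : ℝ) (hs : 0 < s)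
    (hBV : ‖LinearMap.toContinuousLinearMap
      (Matrix.toEuclideanLin (B * V.transpose))‖ ≤ s)
    (I : Finset (Fin n)) (hI : I.card = ⌊ctil * η ^ 3 * ρ ^ 2 * k⌋₊)
    (hcol : ∀ j ∈ I,
      ‖(show EuclideanSpace ℂ (Fin k) from WithLp.toLp 2 (fun i => V i j))‖ ≤ Real.sqrt (C * k / (η * n)))
    (hlow : ∀ z : Fin n → ℂ, (∀ j ∉ I, z j = 0) →
      c * ρ * Real.sqrt (η * k / n) * Real.sqrt (∑ j, ‖z j‖ ^ 2) ≤
        ‖∑ j, z j • (show EuclideanSpace ℂ (Fin k) from WithLp.toLp 2 (fun i => V i j))‖) :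
    ∃ S : Finset (Fin n), S ⊆ I ∧ (I.card : ℝ) ≤ 2 * S.card ∧
      ∀ j ∈ S,
        ‖(Submodule.orthogonalProjectionOnto
            ((Submodule.span ℂ {v : EuclideanSpace ℂ (Fin n) |
              ∃ u ∉ I, v = WithLp.toLp 2 (fun i => B i u)})ᗮ)
            (show EuclideanSpace ℂ (Fin n) from WithLp.toLp 2 (fun i => B i j)) :
          EuclideanSpace ℂ (Fin n))‖ ≤
        Real.sqrt 2 / (c * ρ) * Real.sqrt ((n : ℝ) / (η * k)) * s := by
  classical
  obtain ⟨hη0, hη1⟩ := hη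
  by_cases hIe : I = ∅
  · exact ⟨∅, by simp, by simp [hIe], by simp⟩
  have hIcard : 0 < I.card := Finset.card_pos.2 (Finset.nonempty_of_ne_empty hIe)
  have hk : 0 < k := by
    by_contra hk0
    push_neg at hk0
    interval_cases k
    rw [Nat.cast_zero, mul_zero, Nat.floor_zero] at hI
    omega
  have hn0 : (0:ℝ) < n := by
    have : 0 < n := lt_of_le_of_lt (Nat.zero_le k) hkn
    exact_mod_cast this
  have hkR : (0:ℝ) < k := by exact_mod_cast hk
  have hηk : 0 < η * k := mul_pos hη0 hkR
  -- definitions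
  set K : Submodule ℂ (EuclideanSpace ℂ (Fin n)) :=
    Submodule.span ℂ {v : EuclideanSpace ℂ (Fin n) | ∃ u ∉ I, v = WithLp.toLp 2 (fun i => B i u)} with hKdef
  set Pc : EuclideanSpace ℂ (Fin n) →L[ℂ] EuclideanSpace ℂ (Fin n) :=
    (Kᗮ).subtypeL.comp (Submodule.orthogonalProjectionOnto Kᗮ) with hPc
  set X : Fin n → EuclideanSpace ℂ (Fin n) :=
    fun j => Pc (show EuclideanSpace ℂ (Fin n) from WithLp.toLp 2 (fun i => B i j)) with hXdef
  have hX0 : ∀ j, j ∉ I → X j = 0 := by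
    intro j hj
    have hmem : (show EuclideanSpace ℂ (Fin n) from WithLp.toLp 2 (fun i => B i j)) ∈ K :=
      Submodule.subset_span ⟨j, hj, rfl⟩
    have h := Submodule.orthogonalProjectionOnto_orthogonal_apply_eq_zero hmem
    have h2 : X j = ((Submodule.orthogonalProjectionOnto Kᗮ
        (show EuclideanSpace ℂ (Fin n) from WithLp.toLp 2 (fun i => B i j)) : Kᗮ) : EuclideanSpace ℂ (Fin n)) := rfl
    rw [h2, h, Submodule.coe_zero]
  have hPcle : ∀ x, ‖Pc x‖ ≤ ‖x‖ := by
    intro x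
    have h1 : ‖(Submodule.orthogonalProjectionOnto Kᗮ) x‖ ≤ 1 * ‖x‖ :=
      (Submodule.orthogonalProjectionOnto Kᗮ).le_of_opNorm_le (Submodule.orthogonalProjectionOnto_norm_le Kᗮ) x
    have h2 : Pc x = ((Submodule.orthogonalProjectionOnto Kᗮ x : Kᗮ) : EuclideanSpace ℂ (Fin n)) := rfl
    rw [h2, Submodule.norm_coe]
    linarith
  -- the operator A = P ∘ (B Vᵀ)
  set A : EuclideanSpace ℂ (Fin k) →L[ℂ] EuclideanSpace ℂ (Fin n) :=
    Pc.comp (LinearMap.toContinuousLinearMap (Matrix.toEuclideanLin (B * V.transpose))) with hAdef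
  have hAnorm : ‖A‖ ≤ s := by
    refine ContinuousLinearMap.opNorm_le_bound A hs.le fun x => ?_
    calc ‖A x‖ = ‖Pc ((LinearMap.toContinuousLinearMap (Matrix.toEuclideanLin (B * V.transpose))) x)‖ := rfl
      _ ≤ ‖(LinearMap.toContinuousLinearMap (Matrix.toEuclideanLin (B * V.transpose))) x‖ := hPcle _
      _ ≤ ‖LinearMap.toContinuousLinearMap (Matrix.toEuclideanLin (B * V.transpose))‖ * ‖x‖ :=
          ContinuousLinearMap.le_opNorm _ _
      _ ≤ s * ‖x‖ := by
          exact mul_le_mul_of_nonneg_right hBV (norm_nonneg _)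
  set Y : Fin k → EuclideanSpace ℂ (Fin n) := fun i => ∑ j ∈ I, V i j • X j with hYdef
  have hAe : ∀ i : Fin k, A (EuclideanSpace.single i 1) = Y i := by
    intro i
    have h1 : (LinearMap.toContinuousLinearMap (Matrix.toEuclideanLin (B * V.transpose)))
        (EuclideanSpace.single i 1)
        = ∑ j : Fin n, V i j • (show EuclideanSpace ℂ (Fin n) from WithLp.toLp 2 (fun m => B m j)) := by
      ext m
      have hLHS : (LinearMap.toContinuousLinearMap (Matrix.toEuclideanLin (B * V.transpose)))
          (EuclideanSpace.single i 1) m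
          = ∑ i' : Fin k, (B * V.transpose) m i' * (EuclideanSpace.single i (1:ℂ)) i' := rfl
      rw [hLHS, WithLp.ofLp_sum, Finset.sum_apply]
      have : ∑ i' : Fin k, (B * V.transpose) m i' * (EuclideanSpace.single i (1:ℂ)) i'
          = (B * V.transpose) m i := by
        rw [Finset.sum_eq_single i]
        · simp [EuclideanSpace.single_apply]
        · intro b' _ hb'
          simp [EuclideanSpace.single_apply, hb']
        · simp
      rw [this, Matrix.mul_apply]
      refine Finset.sum_congr rfl fun j _ => ?_
      simp [Matrix.transpose_apply]
      ring
    calc A (EuclideanSpace.single i 1)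
        = Pc (∑ j : Fin n, V i j • (show EuclideanSpace ℂ (Fin n) from WithLp.toLp 2 (fun m => B m j))) := by
          rw [hAdef]; simp only [ContinuousLinearMap.comp_apply]; rw [h1]
      _ = ∑ j : Fin n, V i j • X j := by
          rw [map_sum]
          exact Finset.sum_congr rfl fun j _ => by rw [map_smul]
      _ = Y i := by
          rw [hYdef]
          refine (Finset.sum_subset (Finset.subset_univ I) fun j _ hj => ?_).symm
          rw [hX0 j hj, smul_zero]
  -- Step B
  set W : Submodule ℂ (EuclideanSpace ℂ (Fin n)) := Submodule.span ℂ ↑(I.image X) with hWdef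
  have hYW : ∀ i, A (EuclideanSpace.single i 1) ∈ W := by
    intro i
    rw [hAe i, hYdef]
    refine Submodule.sum_mem _ fun j hj => Submodule.smul_mem _ _ ?_
    exact Submodule.subset_span (by simpa using Finset.mem_image_of_mem X hj)
  have hrank : (Module.finrank ℂ W : ℝ) ≤ (I.card : ℝ) := by
    have h1 : Module.finrank ℂ W ≤ (I.image X).card := finrank_span_finset_le_card (I.image X)
    have h2 : (I.image X).card ≤ I.card := Finset.card_image_le
    exact_mod_cast le_trans h1 h2
  have stepB : ∑ i, ‖Y i‖ ^ 2 ≤ (I.card : ℝ) * s ^ 2 := by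
    have h1 := hs_bound A W hYW
    have h2 : ∑ i, ‖A (EuclideanSpace.single i 1)‖ ^ 2 = ∑ i, ‖Y i‖ ^ 2 :=
      Finset.sum_congr rfl fun i _ => by rw [hAe i]
    rw [h2] at h1
    refine h1.trans ?_
    have hA2 : ‖A‖ ^ 2 ≤ s ^ 2 := pow_le_pow_left₀ (norm_nonneg _) hAnorm 2
    exact mul_le_mul hrank hA2 (sq_nonneg _) (Nat.cast_nonneg _)
  -- Step A
  have stepA : ∀ m : Fin n,
      (c * ρ * Real.sqrt (η * k / n)) ^ 2 * (∑ j ∈ I, ‖X j m‖ ^ 2) ≤ ∑ i, ‖Y i m‖ ^ 2 := by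
    intro m
    set z : Fin n → ℂ := fun j => if j ∈ I then X j m else 0 with hz
    have hz0 : ∀ j ∉ I, z j = 0 := fun j hj => by simp [hz, hj]
    have h := hlow z hz0
    have hsum : ∑ j : Fin n, ‖z j‖ ^ 2 = ∑ j ∈ I, ‖X j m‖ ^ 2 := by
      rw [show ∑ j : Fin n, ‖z j‖ ^ 2
          = ∑ j : Fin n, (if j ∈ I then ‖X j m‖ ^ 2 else 0) from
        Finset.sum_congr rfl fun j _ => by by_cases hj : j ∈ I <;> simp [hz, hj]]
      rw [Finset.sum_ite_mem, Finset.univ_inter]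
    have hvec : ∀ i : Fin k,
        (∑ j : Fin n, z j • (show EuclideanSpace ℂ (Fin k) from WithLp.toLp 2 (fun i' => V i' j))) i
          = Y i m := by
      intro i
      rw [WithLp.ofLp_sum, Finset.sum_apply]
      rw [show ∑ j : Fin n, (z j • (show EuclideanSpace ℂ (Fin k) from WithLp.toLp 2 (fun i' => V i' j))) i
          = ∑ j : Fin n, (if j ∈ I then X j m * V i j else 0) from
        Finset.sum_congr rfl fun j _ => by
          by_cases hj : j ∈ I <;> simp [hz, hj, smul_eq_mul]]
      rw [Finset.sum_ite_mem, Finset.univ_inter, hYdef]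
      show ∑ j ∈ I, X j m * V i j = (∑ j ∈ I, V i j • X j) m
      rw [WithLp.ofLp_sum, Finset.sum_apply]
      exact Finset.sum_congr rfl fun j _ => by simp [smul_eq_mul]; ring
    rw [hsum] at h
    have hL : 0 ≤ c * ρ * Real.sqrt (η * k / n) := by positivity
    have hsq := mul_self_le_mul_self (by positivity) h
    calc (c * ρ * Real.sqrt (η * k / n)) ^ 2 * (∑ j ∈ I, ‖X j m‖ ^ 2)
        = (c * ρ * Real.sqrt (η * k / n) * Real.sqrt (∑ j ∈ I, ‖X j m‖ ^ 2)) *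
          (c * ρ * Real.sqrt (η * k / n) * Real.sqrt (∑ j ∈ I, ‖X j m‖ ^ 2)) := by
          rw [show ∀ a b : ℝ, (a * b) * (a * b) = a ^ 2 * (b * b) from fun a b => by ring]
          rw [Real.mul_self_sqrt (Finset.sum_nonneg fun j _ => sq_nonneg _)]
      _ ≤ ‖∑ j : Fin n, z j • (show EuclideanSpace ℂ (Fin k) from WithLp.toLp 2 (fun i' => V i' j))‖ *
          ‖∑ j : Fin n, z j • (show EuclideanSpace ℂ (Fin k) from WithLp.toLp 2 (fun i' => V i' j))‖ := hsq
      _ = ∑ i, ‖Y i m‖ ^ 2 := by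
          rw [← pow_two, eucl_norm_sq]
          exact Finset.sum_congr rfl fun i _ => by rw [hvec i]
  -- combine
  have key : (c * ρ * Real.sqrt (η * k / n)) ^ 2 * (∑ j ∈ I, ‖X j‖ ^ 2)
      ≤ (I.card : ℝ) * s ^ 2 := by
    calc (c * ρ * Real.sqrt (η * k / n)) ^ 2 * (∑ j ∈ I, ‖X j‖ ^ 2)
        = ∑ m : Fin n, (c * ρ * Real.sqrt (η * k / n)) ^ 2 * (∑ j ∈ I, ‖X j m‖ ^ 2) := by
          rw [← Finset.mul_sum]
          congr 1
          rw [show ∑ j ∈ I, ‖X j‖ ^ 2 = ∑ j ∈ I, ∑ m : Fin n, ‖X j m‖ ^ 2 from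
            Finset.sum_congr rfl fun j _ => eucl_norm_sq (X j)]
          exact Finset.sum_comm
      _ ≤ ∑ m : Fin n, ∑ i, ‖Y i m‖ ^ 2 := Finset.sum_le_sum fun m _ => stepA m
      _ = ∑ i, ‖Y i‖ ^ 2 := by
          rw [Finset.sum_comm]
          exact Finset.sum_congr rfl fun i _ => (eucl_norm_sq (Y i)).symm
      _ ≤ (I.card : ℝ) * s ^ 2 := stepB
  -- Markov argument
  have hprod : Real.sqrt (η * k / (n:ℝ)) * Real.sqrt ((n:ℝ) / (η * k)) = 1 := by
    rw [← Real.sqrt_mul (by positivity)]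
    rw [show η * k / (n:ℝ) * ((n:ℝ) / (η * k)) = 1 by field_simp]
    exact Real.sqrt_one
  have hcρ : c * ρ ≠ 0 := by positivity
  set Mb := Real.sqrt 2 / (c * ρ) * Real.sqrt ((n : ℝ) / (η * k)) * s with hMbdef
  have hαMb : (c * ρ * Real.sqrt (η * k / n)) * Mb = Real.sqrt 2 * s := by
    calc (c * ρ * Real.sqrt (η * k / n)) * (Real.sqrt 2 / (c * ρ) * Real.sqrt ((n:ℝ) / (η * k)) * s)
        = (c * ρ / (c * ρ)) * (Real.sqrt (η * k / n) * Real.sqrt ((n:ℝ) / (η * k))) *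
            (Real.sqrt 2 * s) := by ring
      _ = Real.sqrt 2 * s := by rw [div_self hcρ, hprod]; ring
  have hMb0 : 0 ≤ Mb := by positivity
  set S := I.filter (fun j => ‖X j‖ ≤ Mb) with hSdef
  have hSsub : S ⊆ I := Finset.filter_subset _ _
  refine ⟨S, hSsub, ?_, ?_⟩
  · have h1 : ∀ j ∈ I \ S, Mb ^ 2 ≤ ‖X j‖ ^ 2 := by
      intro j hj
      rw [Finset.mem_sdiff, hSdef, Finset.mem_filter] at hj
      have hlt : Mb < ‖X j‖ := lt_of_not_ge fun hle => hj.2 ⟨hj.1, hle⟩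
      exact pow_le_pow_left₀ hMb0 hlt.le 2
    have h2 : (((I \ S).card : ℝ)) * Mb ^ 2 ≤ ∑ j ∈ I, ‖X j‖ ^ 2 := by
      calc (((I \ S).card : ℝ)) * Mb ^ 2 = ∑ _j ∈ I \ S, Mb ^ 2 := by
            rw [Finset.sum_const, nsmul_eq_mul]
        _ ≤ ∑ j ∈ I \ S, ‖X j‖ ^ 2 := Finset.sum_le_sum h1
        _ ≤ ∑ j ∈ I, ‖X j‖ ^ 2 :=
            Finset.sum_le_sum_of_subset_of_nonneg Finset.sdiff_subset fun j _ _ => sq_nonneg _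
    have hαM2 : (c * ρ * Real.sqrt (η * k / n)) ^ 2 * Mb ^ 2 = 2 * s ^ 2 := by
      calc (c * ρ * Real.sqrt (η * k / n)) ^ 2 * Mb ^ 2
          = ((c * ρ * Real.sqrt (η * k / n)) * Mb) ^ 2 := by ring
        _ = (Real.sqrt 2 * s) ^ 2 := by rw [hαMb]
        _ = 2 * s ^ 2 := by rw [mul_pow, Real.sq_sqrt (by norm_num : (0:ℝ) ≤ 2)]
    have h4 : (((I \ S).card : ℝ)) * (2 * s ^ 2) ≤ (I.card : ℝ) * s ^ 2 := by
      calc (((I \ S).card : ℝ)) * (2 * s ^ 2)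
          = (c * ρ * Real.sqrt (η * k / n)) ^ 2 * ((((I \ S).card : ℝ)) * Mb ^ 2) := by
            rw [show (c * ρ * Real.sqrt (η * ↑k / ↑n)) ^ 2 * ((((I \ S).card : ℝ)) * Mb ^ 2)
                = (((I \ S).card : ℝ)) * ((c * ρ * Real.sqrt (η * ↑k / ↑n)) ^ 2 * Mb ^ 2) from by
              ring]
            rw [hαM2]
        _ ≤ (c * ρ * Real.sqrt (η * k / n)) ^ 2 * ∑ j ∈ I, ‖X j‖ ^ 2 :=
            mul_le_mul_of_nonneg_left h2 (sq_nonneg _)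
        _ ≤ (I.card : ℝ) * s ^ 2 := key
    have hs2 : (0:ℝ) < s ^ 2 := pow_pos hs 2
    have h4' : (2 * (((I \ S).card : ℝ))) * s ^ 2 ≤ (I.card : ℝ) * s ^ 2 := by linarith
    have h5 : 2 * (((I \ S).card : ℝ)) ≤ (I.card : ℝ) := le_of_mul_le_mul_right h4' hs2
    have h6 : (((I \ S).card : ℝ)) = (I.card : ℝ) - (S.card : ℝ) := by
      rw [Finset.card_sdiff_of_subset hSsub, Nat.cast_sub (Finset.card_le_card hSsub)]
    rw [h6] at h5
    linarith
  · intro j hj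
    rw [hSdef, Finset.mem_filter] at hj
    exact hj.2
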